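/- Under the latent symmetry assumption, if Z_k ∈ ℝ^{n_c×L} is the matrix whose ℓ-th column is the standard basis vector e_{z_{k,ℓ}}, and Z = [Z_1 … Z_K] ∈ ℝ^{n_c×KL}, then ∑_{k=1}^K Z_k = (K/n_c) 𝟙_{n_c} 𝟙_L^T and Z Zᵀ = (KL/n_c) I_{n_c}. -/

import Mathlib

open Finset Matrix

/-- One-hot concept matrix of the latent variable `z k`: its `ℓ`-th column is the
standard basis vector `e_{z k ℓ}`. -/
def Zmat {n_c L K : ℕ} (z : Fin K → Fin L → Fin n_c) (k : Fin K) :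
    Matrix (Fin n_c) (Fin L) ℝ :=
  Matrix.of fun α ℓ => if z k ℓ = α then 1 else 0

/-- The concatenation `Z = [Z_1 … Z_K]`. -/
def Zbig {n_c L K : ℕ} (z : Fin K → Fin L → Fin n_c) :
    Matrix (Fin n_c) (Fin K × Fin L) ℝ :=
  Matrix.of fun α p => if z p.1 p.2 = α then 1 else 0


lemma binom_sum (m : ℕ) (x : ℝ) :
    ∑ r ∈ Finset.range (m + 1), (m.choose r : ℝ) * x ^ r = (x + 1) ^ m := by
  rw [add_pow]
  exact Finset.sum_congr rfl fun r hr => by ring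

lemma core_lemma (n_c L K : ℕ) (hn : 2 ≤ n_c) (hL : 1 ≤ L) (hK : 1 ≤ K)
    (z : Fin K → Fin L → Fin n_c)
    (hsym : ∀ (k : Fin K) (ℓ : Fin L) (α : Fin n_c), ∀ r ∈ Finset.Icc 1 L,
      ((Finset.univ.filter fun j : Fin K =>
          hammingDist (z j) (z k) = r ∧ z j ℓ = α).card : ℝ) =
        if z k ℓ = α then
          (K / n_c ^ L : ℝ) * Nat.choose (L - 1) r * ((n_c : ℝ) - 1) ^ r
        else
          (K / n_c ^ L : ℝ) * Nat.choose (L - 1) (r - 1) * ((n_c : ℝ) - 1) ^ (r - 1))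
    (ℓ : Fin L) (α : Fin n_c) :
    ((Finset.univ.filter fun j : Fin K => z j ℓ = α).card : ℝ) = K / n_c := by
  have hnc0 : (0:ℝ) < n_c := by positivity
  have hk0 : Fin K := ⟨0, hK⟩
  have hL1 : L - 1 + 1 = L := Nat.succ_pred_eq_of_pos hL
  -- fiber decomposition by hamming distance
  have hfib : ∀ β : Fin n_c,
      ((Finset.univ.filter fun j : Fin K => z j ℓ = β).card : ℝ) =
      ∑ r ∈ Finset.range (L + 1),
        ((Finset.univ.filter fun j : Fin K =>
          hammingDist (z j) (z hk0) = r ∧ z j ℓ = β).card : ℝ) := by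
    intro β
    have h := Finset.card_eq_sum_card_fiberwise
      (s := Finset.univ.filter fun j : Fin K => z j ℓ = β)
      (t := Finset.range (L + 1))
      (f := fun j => hammingDist (z j) (z hk0))
      (by
        intro x _
        simp only [Finset.mem_range, Nat.lt_succ_iff]
        simpa using hammingDist_le_card_fintype (x := z x) (y := z hk0))
    push_cast [h]
    refine Finset.sum_congr rfl fun r _ => ?_
    congr 2
    rw [Finset.filter_filter]
    congr 1
    ext j
    exact and_comm
  -- value for β ≠ z hk0 ℓ
  have hB : ∀ β : Fin n_c, z hk0 ℓ ≠ β →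
      ((Finset.univ.filter fun j : Fin K => z j ℓ = β).card : ℝ) = K / n_c := by
    intro β hβ
    rw [hfib β, Finset.sum_range_succ']
    have h0 : (Finset.univ.filter fun j : Fin K =>
        hammingDist (z j) (z hk0) = 0 ∧ z j ℓ = β) = ∅ := by
      ext j
      simp only [Finset.mem_filter, Finset.mem_univ, true_and, Finset.notMem_empty,
        iff_false, not_and, hammingDist_eq_zero]
      intro h
      rw [h]
      exact fun hc => hβ hc
    rw [h0]
    have hterm : ∀ r ∈ Finset.range L,
        ((Finset.univ.filter fun j : Fin K =>
          hammingDist (z j) (z hk0) = r + 1 ∧ z j ℓ = β).card : ℝ) =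
        (K / n_c ^ L : ℝ) * (((L-1).choose r : ℝ) * ((n_c : ℝ) - 1) ^ r) := by
      intro r hr
      have hr' : r + 1 ∈ Finset.Icc 1 L := by
        simp only [Finset.mem_range] at hr
        simp [Nat.succ_le_iff, hr]
      have h := hsym hk0 ℓ β (r+1) hr'
      rw [if_neg hβ] at h
      simp only [Nat.add_sub_cancel] at h
      rw [h]
      ring
    rw [Finset.sum_congr rfl hterm, ← Finset.mul_sum]
    have h2 := binom_sum (L-1) ((n_c:ℝ)-1)
    rw [hL1, sub_add_cancel] at h2
    rw [h2]
    have hpow : (n_c:ℝ) ^ L = (n_c:ℝ) ^ (L-1) * n_c := by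
      rw [← pow_succ, hL1]
    rw [hpow]
    field_simp
    simp
  -- total sum over β equals K
  have htot : ∑ β : Fin n_c,
      ((Finset.univ.filter fun j : Fin K => z j ℓ = β).card : ℝ) = K := by
    have h := Finset.card_eq_sum_card_fiberwise
      (s := (Finset.univ : Finset (Fin K)))
      (t := (Finset.univ : Finset (Fin n_c)))
      (f := fun j => z j ℓ) (fun x _ => Finset.mem_univ _)
    have : ((Finset.univ : Finset (Fin K)).card : ℝ) = ∑ β : Fin n_c,
        ((Finset.univ.filter fun j : Fin K => z j ℓ = β).card : ℝ) := by
      rw [h]; push_cast; rfl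
    rw [← this]; simp
  by_cases hα : z hk0 ℓ = α
  · -- use the total sum
    have herase : ∀ β ∈ Finset.univ.erase α,
        ((Finset.univ.filter fun j : Fin K => z j ℓ = β).card : ℝ) = K / n_c := by
      intro β hβ
      apply hB
      rw [hα]
      exact Ne.symm (Finset.mem_erase.mp hβ).1
    have hsplit := Finset.add_sum_erase Finset.univ
      (fun β : Fin n_c => ((Finset.univ.filter fun j : Fin K => z j ℓ = β).card : ℝ))
      (Finset.mem_univ α)
    rw [← hsplit, Finset.sum_congr rfl herase, Finset.sum_const,
      Finset.card_erase_of_mem (Finset.mem_univ α)] at htot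
    simp only [Finset.card_univ, Fintype.card_fin, nsmul_eq_mul] at htot
    have hcast : (((n_c - 1 : ℕ)) : ℝ) = (n_c : ℝ) - 1 := by
      push_cast [Nat.cast_sub (by omega : 1 ≤ n_c)]; ring
    rw [hcast] at htot
    have : ((Finset.univ.filter fun j : Fin K => z j ℓ = α).card : ℝ)
        = K - ((n_c:ℝ) - 1) * (K / n_c) := by linarith
    rw [this]
    field_simp
    ring
  · exact hB α hα

theorem latent_symmetry_Z_identities (n_c L K : ℕ) (hn : 2 ≤ n_c) (hL : 1 ≤ L) (hK : 1 ≤ K)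
    (z : Fin K → Fin L → Fin n_c)
    (hsym : ∀ (k : Fin K) (ℓ : Fin L) (α : Fin n_c), ∀ r ∈ Finset.Icc 1 L,
      ((Finset.univ.filter fun j : Fin K =>
          hammingDist (z j) (z k) = r ∧ z j ℓ = α).card : ℝ) =
        if z k ℓ = α then
          (K / n_c ^ L : ℝ) * Nat.choose (L - 1) r * ((n_c : ℝ) - 1) ^ r
        else
          (K / n_c ^ L : ℝ) * Nat.choose (L - 1) (r - 1) * ((n_c : ℝ) - 1) ^ (r - 1)) :
    (∑ k, Zmat z k) = ((K : ℝ) / n_c) • Matrix.of (fun _ _ => (1 : ℝ)) ∧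
    Zbig z * (Zbig z)ᵀ = (((K : ℝ) * L) / n_c) • (1 : Matrix (Fin n_c) (Fin n_c) ℝ) := by
  have hZ := core_lemma n_c L K hn hL hK z hsym
  constructor
  · ext α ℓ
    rw [Matrix.sum_apply]
    simp only [Zmat, Matrix.of_apply, Matrix.smul_apply, smul_eq_mul, mul_one]
    rw [Finset.sum_boole]
    exact hZ ℓ α
  · ext α β
    rw [Matrix.mul_apply]
    simp only [Zbig, Matrix.of_apply, Matrix.transpose_apply, Matrix.smul_apply,
      Matrix.one_apply, smul_eq_mul]
    by_cases hab : α = β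
    · subst hab
      rw [if_pos rfl, mul_one]
      have hstep : ∀ p : Fin K × Fin L,
          (if z p.1 p.2 = α then (1:ℝ) else 0) * (if z p.1 p.2 = α then (1:ℝ) else 0)
          = if z p.1 p.2 = α then (1:ℝ) else 0 := by
        intro p; split <;> simp
      rw [Finset.sum_congr rfl fun p _ => hstep p]
      rw [Fintype.sum_prod_type, Finset.sum_comm]
      have : ∀ ℓ : Fin L, ∑ k : Fin K, (if z k ℓ = α then (1:ℝ) else 0) = K / n_c := by
        intro ℓ
        rw [Finset.sum_boole]
        exact hZ ℓ α
      rw [Finset.sum_congr rfl fun ℓ _ => this ℓ, Finset.sum_const]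
      simp only [Finset.card_univ, Fintype.card_fin, nsmul_eq_mul]
      ring
    · rw [if_neg hab, mul_zero]
      refine Finset.sum_eq_zero fun p _ => ?_
      by_cases h : z p.1 p.2 = α <;> simp [h, hab]
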